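/- For any data x₁,…,x_N ∈ ℝ with N ≥ 1 and empirical mean x̄ = (1/N)∑xᵢ and empirical variance s² = (1/N)∑(xᵢ − x̄)² > 0, every parameter point (α, μ₁, μ₂, σ₁, σ₂) with μ₁ = μ₂ = x̄ and σ₁ = σ₂ = s is a critical point of the log-likelihood function ℓ of the two-component univariate Gaussian mixture model (all five partial derivatives of ℓ vanish there). -/

import Mathlib

open Real

/-- The two-component univariate Gaussian mixture density. -/
noncomputable def mixf (α μ₁ μ₂ σ₁ σ₂ x : ℝ) : ℝ :=
  (1 / Real.sqrt (2 * Real.pi)) *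
    (α / σ₁ * Real.exp (-(x - μ₁) ^ 2 / (2 * σ₁ ^ 2)) +
      (1 - α) / σ₂ * Real.exp (-(x - μ₂) ^ 2 / (2 * σ₂ ^ 2)))

/-- The log-likelihood for data x₁,…,x_N. -/
noncomputable def loglik (N : ℕ) (x : Fin N → ℝ) (α μ₁ μ₂ σ₁ σ₂ : ℝ) : ℝ :=
  ∑ i, Real.log (mixf α μ₁ μ₂ σ₁ σ₂ (x i))

lemma mixf_swap (α μ₁ μ₂ σ₁ σ₂ y : ℝ) :
    mixf α μ₁ μ₂ σ₁ σ₂ y = mixf (1 - α) μ₂ μ₁ σ₂ σ₁ y := by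
  unfold mixf; ring

lemma loglik_swap (N : ℕ) (x : Fin N → ℝ) (α μ₁ μ₂ σ₁ σ₂ : ℝ) :
    loglik N x α μ₁ μ₂ σ₁ σ₂ = loglik N x (1 - α) μ₂ μ₁ σ₂ σ₁ := by
  unfold loglik
  exact Finset.sum_congr rfl fun i _ => by rw [mixf_swap]

lemma sqrt_two_pi_pos : 0 < Real.sqrt (2 * Real.pi) :=
  Real.sqrt_pos.2 (by positivity)

lemma log_mixf_mu1 (β s : ℝ) (hs : 0 < s) (y c : ℝ) :
    HasDerivAt (fun m => Real.log (mixf β m c s s y)) (β * (y - c) / s ^ 2) c := by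
  have hE : (0:ℝ) < Real.exp (-(y - c) ^ 2 / (2 * s ^ 2)) := Real.exp_pos _
  have hC : (0:ℝ) < 1 / Real.sqrt (2 * Real.pi) := by
    have := sqrt_two_pi_pos; positivity
  have h1 : HasDerivAt (fun m : ℝ => -(y - m) ^ 2 / (2 * s ^ 2)) ((y - c) / s ^ 2) c := by
    have h0 : HasDerivAt (fun m : ℝ => y - m) (-1) c := by
      simpa using (hasDerivAt_id c).const_sub y
    have h2 := (h0.pow 2).neg.div_const (2 * s ^ 2)
    refine h2.congr_deriv ?_
    field_simp
    ring
  have h3 : HasDerivAt (fun m : ℝ => β / s * Real.exp (-(y - m) ^ 2 / (2 * s ^ 2)))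
      (β / s * (Real.exp (-(y - c) ^ 2 / (2 * s ^ 2)) * ((y - c) / s ^ 2))) c :=
    (h1.exp).const_mul _
  have h4 := ((h3.add_const ((1 - β) / s *
      Real.exp (-(y - c) ^ 2 / (2 * s ^ 2)))).const_mul (1 / Real.sqrt (2 * Real.pi)))
  have hval : mixf β c c s s y =
      (1 / Real.sqrt (2 * Real.pi)) * (Real.exp (-(y - c) ^ 2 / (2 * s ^ 2)) / s) := by
    unfold mixf; ring
  have hne : mixf β c c s s y ≠ 0 := by
    rw [hval]; positivity
  have h5 := h4.log hne
  refine h5.congr_deriv ?_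
  have key : ∀ C E : ℝ, C ≠ 0 → E ≠ 0 →
      C * (β / s * (E * ((y - c) / s ^ 2))) / (C * (β / s * E + (1 - β) / s * E))
        = β * (y - c) / s ^ 2 := by
    intro C E hCne hEne
    have hd : β / s * E + (1 - β) / s * E = E / s := by ring
    rw [hd]
    rw [div_eq_iff (by positivity : C * (E / s) ≠ 0)]
    field_simp
  exact (key _ _ hC.ne' hE.ne')

lemma log_mixf_sig1 (β s : ℝ) (hs : 0 < s) (y c : ℝ) :
    HasDerivAt (fun t => Real.log (mixf β c c t s y))
      (β * ((y - c) ^ 2 / s ^ 3 - 1 / s)) s := by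
  have hE : (0:ℝ) < Real.exp (-(y - c) ^ 2 / (2 * s ^ 2)) := Real.exp_pos _
  have hC : (0:ℝ) < 1 / Real.sqrt (2 * Real.pi) := by
    have := sqrt_two_pi_pos; positivity
  have hs' : s ≠ 0 := hs.ne'
  -- derivative of the exponent t ↦ -(y-c)^2/(2 t^2) at s
  have hden : HasDerivAt (fun t : ℝ => 2 * t ^ 2) (2 * (2 * s)) s := by
    simpa using ((hasDerivAt_pow 2 s).const_mul 2)
  have hg : HasDerivAt (fun t : ℝ => -(y - c) ^ 2 / (2 * t ^ 2)) ((y - c) ^ 2 / s ^ 3) s := by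
    have h := (hasDerivAt_const s (-(y - c) ^ 2)).div hden (by positivity)
    refine h.congr_deriv ?_
    field_simp
    ring
  have hq : HasDerivAt (fun t : ℝ => β / t) (-β / s ^ 2) s := by
    have h := (hasDerivAt_const s β).div (hasDerivAt_id s) hs'
    refine h.congr_deriv ?_
    simp only [id_eq]
    field_simp
    ring
  have h3 := hq.mul hg.exp
  have h4 := ((h3.add_const ((1 - β) / s *
      Real.exp (-(y - c) ^ 2 / (2 * s ^ 2)))).const_mul (1 / Real.sqrt (2 * Real.pi)))
  have hval : mixf β c c s s y =
      (1 / Real.sqrt (2 * Real.pi)) * (Real.exp (-(y - c) ^ 2 / (2 * s ^ 2)) / s) := by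
    unfold mixf; ring
  have hne : mixf β c c s s y ≠ 0 := by
    rw [hval]; positivity
  have h5 := h4.log hne
  refine h5.congr_deriv ?_
  have key : ∀ C E : ℝ, C ≠ 0 → E ≠ 0 →
      C * (-β / s ^ 2 * E + β / s * (E * ((y - c) ^ 2 / s ^ 3)))
          / (C * (β / s * E + (1 - β) / s * E))
        = β * ((y - c) ^ 2 / s ^ 3 - 1 / s) := by
    intro C E hCne hEne
    have hd : β / s * E + (1 - β) / s * E = E / s := by ring
    rw [hd]
    rw [div_eq_iff (by positivity : C * (E / s) ≠ 0)]
    field_simp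
    ring
  exact (key _ _ hC.ne' hE.ne')

lemma key_mu (N : ℕ) (hN : 1 ≤ N) (x : Fin N → ℝ) (xbar s : ℝ)
    (hxbar : xbar = (∑ i, x i) / N) (hs : 0 < s) (β : ℝ) :
    deriv (fun m => loglik N x β m xbar s s) xbar = 0 := by
  have hNne : (N : ℝ) ≠ 0 := Nat.cast_ne_zero.2 (by omega)
  have h : HasDerivAt (fun m => loglik N x β m xbar s s)
      (∑ i, β * (x i - xbar) / s ^ 2) xbar := by
    unfold loglik
    exact HasDerivAt.fun_sum fun i _ => log_mixf_mu1 β s hs (x i) xbar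
  rw [h.deriv]
  have hsx : ∑ i, x i = N * xbar := by rw [hxbar]; field_simp
  have h1 : ∑ i, β * (x i - xbar) / s ^ 2 = (β / s ^ 2) * ∑ i, (x i - xbar) := by
    rw [Finset.mul_sum]
    exact Finset.sum_congr rfl fun i _ => by ring
  rw [h1, Finset.sum_sub_distrib, Finset.sum_const, Finset.card_univ, Fintype.card_fin,
    nsmul_eq_mul, hsx]
  ring

lemma key_sig (N : ℕ) (hN : 1 ≤ N) (x : Fin N → ℝ) (xbar s : ℝ) (hs : 0 < s)
    (hs2 : s ^ 2 = (∑ i, (x i - xbar) ^ 2) / N) (β : ℝ) :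
    deriv (fun t => loglik N x β xbar xbar t s) s = 0 := by
  have hNne : (N : ℝ) ≠ 0 := Nat.cast_ne_zero.2 (by omega)
  have h : HasDerivAt (fun t => loglik N x β xbar xbar t s)
      (∑ i, β * ((x i - xbar) ^ 2 / s ^ 3 - 1 / s)) s := by
    unfold loglik
    exact HasDerivAt.fun_sum fun i _ => log_mixf_sig1 β s hs (x i) xbar
  rw [h.deriv]
  have hsx : ∑ i, (x i - xbar) ^ 2 = N * s ^ 2 := by rw [hs2]; field_simp
  have h1 : ∑ i, β * ((x i - xbar) ^ 2 / s ^ 3 - 1 / s)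
      = (β / s ^ 3) * (∑ i, (x i - xbar) ^ 2) - N * (β / s) := by
    rw [Finset.mul_sum]
    rw [show (N : ℝ) * (β / s) = ∑ _i : Fin N, (β / s) by
      rw [Finset.sum_const, Finset.card_univ, Fintype.card_fin, nsmul_eq_mul]]
    rw [← Finset.sum_sub_distrib]
    exact Finset.sum_congr rfl fun i _ => by ring
  rw [h1, hsx]
  field_simp
  ring

/-- Any point with both means equal to the sample mean and both standard deviations
equal to the sample standard deviation is a critical point of the log-likelihood. -/
theorem trivial_critical_points (N : ℕ) (hN : 1 ≤ N) (x : Fin N → ℝ)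
    (xbar s : ℝ) (hxbar : xbar = (∑ i, x i) / N) (hs : 0 < s)
    (hs2 : s ^ 2 = (∑ i, (x i - xbar) ^ 2) / N)
    (α : ℝ) (hα : 0 < α ∧ α < 1) :
    deriv (fun a => loglik N x a xbar xbar s s) α = 0 ∧
    deriv (fun m₁ => loglik N x α m₁ xbar s s) xbar = 0 ∧
    deriv (fun m₂ => loglik N x α xbar m₂ s s) xbar = 0 ∧
    deriv (fun t₁ => loglik N x α xbar xbar t₁ s) s = 0 ∧
    deriv (fun t₂ => loglik N x α xbar xbar s t₂) s = 0 := by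
  refine ⟨?_, ?_, ?_, ?_, ?_⟩
  · have hconst : (fun a => loglik N x a xbar xbar s s)
        = fun _ => loglik N x 0 xbar xbar s s := by
      funext a
      unfold loglik
      exact Finset.sum_congr rfl fun i _ => by
        congr 1
        unfold mixf
        ring
    rw [hconst]
    exact deriv_const _ _
  · exact key_mu N hN x xbar s hxbar hs α
  · have : (fun m₂ => loglik N x α xbar m₂ s s)
        = fun m₂ => loglik N x (1 - α) m₂ xbar s s := by
      funext m; exact loglik_swap N x α xbar m s s
    rw [this]
    exact key_mu N hN x xbar s hxbar hs (1 - α)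
  · exact key_sig N hN x xbar s hs hs2 α
  · have : (fun t₂ => loglik N x α xbar xbar s t₂)
        = fun t₂ => loglik N x (1 - α) xbar xbar t₂ s := by
      funext t; exact loglik_swap N x α xbar xbar s t
    rw [this]
    exact key_sig N hN x xbar s hs hs2 (1 - α)
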